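/- If f : [a,b] → ℝ is continuous and t' ∈ (0, b-a], then the Lebesgue measure of the sublevel set {t ∈ [a,b] : f(t) < f^#(t')} is at most t'. -/

import Mathlib

open MeasureTheory Set

/-- The monotone reordering of `f : [a,b] → ℝ`. -/
noncomputable def monRe (f : ℝ → ℝ) (a b : ℝ) (t : ℝ) : ℝ :=
  sInf { s : ℝ | t ≤ (volume { x ∈ Icc a b | f x ≤ s }).toReal }

theorem measure_strict_sublevel_le (f : ℝ → ℝ) (a b : ℝ) (hab : a ≤ b)
    (hf : ContinuousOn f (Icc a b)) (t' : ℝ) (ht' : t' ∈ Ioc 0 (b - a)) :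
    (volume { t ∈ Icc a b | f t < monRe f a b t' }).toReal ≤ t' := by
  obtain ⟨ht0, htba⟩ := ht'
  set S : Set ℝ := { s : ℝ | t' ≤ (volume { x ∈ Icc a b | f x ≤ s }).toReal } with hS
  set m := monRe f a b t' with hm
  have hmS : m = sInf S := rfl
  -- S is bounded below by the minimum of f on [a,b]
  obtain ⟨x0, hx0, hx0min⟩ := (isCompact_Icc).exists_isMinOn (nonempty_Icc.2 hab) hf
  have hbdd : BddBelow S := by
    refine ⟨f x0, fun s hs => ?_⟩
    by_contra hlt
    push_neg at hlt
    have hempty : { x ∈ Icc a b | f x ≤ s } = ∅ := by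
      ext x
      simp only [mem_setOf_eq, mem_empty_iff_false, iff_false, not_and, not_le]
      intro hx
      exact lt_of_lt_of_le hlt (hx0min hx)
    rw [hS] at hs
    simp only [mem_setOf_eq, hempty, measure_empty, ENNReal.toReal_zero] at hs
    linarith
  -- the sublevel sets
  set A : ℕ → Set ℝ := fun n => { x ∈ Icc a b | f x ≤ m - 1 / (n + 1) } with hA
  have hmono : Monotone A := by
    intro i j hij x hx
    refine ⟨hx.1, le_trans hx.2 ?_⟩
    have : (1 : ℝ) / (j + 1) ≤ 1 / (i + 1) := by
      apply one_div_le_one_div_of_le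
      · positivity
      · exact_mod_cast by omega
    linarith
  have hUnion : { t ∈ Icc a b | f t < m } = ⋃ n, A n := by
    ext x
    simp only [mem_setOf_eq, mem_iUnion, hA]
    constructor
    · rintro ⟨hx, hfx⟩
      obtain ⟨n, hn⟩ := exists_nat_one_div_lt (sub_pos.2 hfx)
      exact ⟨n, hx, by linarith⟩
    · rintro ⟨n, hx, hfx⟩
      have : (0 : ℝ) < 1 / (n + 1) := by positivity
      exact ⟨hx, by linarith⟩
  have hmeas : ∀ n, MeasurableSet (A n) := by
    intro n
    have : A n = Icc a b ∩ f ⁻¹' Iic (m - 1 / (n + 1)) := by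
      ext x; simp [hA, mem_setOf_eq, and_comm]
    rw [this]
    exact (hf.preimage_isClosed_of_isClosed isClosed_Icc isClosed_Iic).measurableSet
  have hbound : ∀ n, volume (A n) ≤ ENNReal.ofReal t' := by
    intro n
    have hsub : A n ⊆ Icc a b := fun x hx => hx.1
    have hfin : volume (A n) < ⊤ :=
      lt_of_le_of_lt (measure_mono hsub) (by simp [Real.volume_Icc])
    have hnotS : (m - 1 / (n + 1)) ∉ S := by
      intro hmem
      have := csInf_le hbdd hmem
      rw [← hmS] at this
      have hpos : (0 : ℝ) < 1 / (n + 1) := by positivity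
      linarith
    have hlt : (volume (A n)).toReal < t' := by
      rw [hS] at hnotS
      simp only [mem_setOf_eq, not_le] at hnotS
      exact hnotS
    calc volume (A n) = ENNReal.ofReal (volume (A n)).toReal :=
          (ENNReal.ofReal_toReal hfin.ne).symm
      _ ≤ ENNReal.ofReal t' := ENNReal.ofReal_le_ofReal hlt.le
  have hkey : volume { t ∈ Icc a b | f t < m } ≤ ENNReal.ofReal t' := by
    rw [hUnion, hmono.directed_le.measure_iUnion]
    exact iSup_le hbound
  exact ENNReal.toReal_le_of_le_ofReal ht0.le hkey
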